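/- arXiv:2501.19148 — 8 statements merged into one kernel-verified Lean document; each statement's English description precedes it below -/
import Mathlib

section
/- Let v ∈ ℝ_{≥0}^n, ε ≥ 0, and ρ ∈ ℝ_{≥0} satisfy v↓_ℓ ≤ ρ ≤ (1+ε)·v↓_ℓ, where v↓ is v sorted nonincreasingly. Then ℓ·ρ + ∑_{i=1}^n (v_i − ρ)^+ ≤ (1+ε)·Top_ℓ(v). -/
open Finset

/-- `Topl ℓ v` : the sum of the `ℓ` largest entries of `v`, expressed as the
maximum subset-sum over subsets of cardinality `ℓ` (these agree for `ℓ ≤ n`). -/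
noncomputable def Topl {ι : Type*} [Fintype ι] (ℓ : ℕ) (v : ι → ℝ) : ℝ :=
  sSup {x : ℝ | ∃ S : Finset ι, S.card = ℓ ∧ x = ∑ i ∈ S, v i}

/-- `nthLargest ℓ v` : the `ℓ`-th largest coordinate of `v` (1-indexed), i.e. the
largest threshold `t` such that at least `ℓ` coordinates are `≥ t`. -/
noncomputable def nthLargest {ι : Type*} [Fintype ι] (ℓ : ℕ) (v : ι → ℝ) : ℝ :=
  sSup {t : ℝ | ℓ ≤ {i | t ≤ v i}.ncard}

theorem stmt1 (n ℓ : ℕ) (hℓ1 : 1 ≤ ℓ) (hℓn : ℓ ≤ n)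
    (v : Fin n → ℝ) (hv : ∀ i, 0 ≤ v i)
    (ε ρ : ℝ) (hε : 0 ≤ ε) (hρ0 : 0 ≤ ρ)
    (h1 : nthLargest ℓ v ≤ ρ) (h2 : ρ ≤ (1 + ε) * nthLargest ℓ v) :
    (ℓ : ℝ) * ρ + ∑ i, max (v i - ρ) 0 ≤ (1 + ε) * Topl ℓ v := by
  classical
  set lam := nthLargest ℓ v with hlamdef
  set T : Set ℝ := {t : ℝ | ℓ ≤ {i | t ≤ v i}.ncard} with hTdef
  have hlamT : lam = sSup T := rfl
  have hncard : ∀ t : ℝ, {i | t ≤ v i}.ncard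
      = (Finset.univ.filter (fun i => t ≤ v i)).card := by
    intro t
    rw [Set.ncard_eq_toFinset_card', Set.toFinset_setOf]
  have hn : 0 < n := lt_of_lt_of_le hℓ1 hℓn
  have hune : (Finset.univ : Finset (Fin n)).Nonempty := ⟨⟨0, hn⟩, Finset.mem_univ _⟩
  have hT0 : (0:ℝ) ∈ T := by
    simp only [hTdef, Set.mem_setOf_eq, hncard]
    have heq : Finset.univ.filter (fun i => (0:ℝ) ≤ v i) = Finset.univ :=
      Finset.filter_true_of_mem (fun i _ => hv i)
    rw [heq]
    simpa using hℓn
  have hTne : T.Nonempty := ⟨0, hT0⟩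
  have hTbdd : BddAbove T := by
    refine ⟨Finset.univ.sup' hune v, fun t ht => ?_⟩
    simp only [hTdef, Set.mem_setOf_eq, hncard] at ht
    obtain ⟨i, hi⟩ := Finset.card_pos.mp (lt_of_lt_of_le hℓ1 ht)
    simp only [Finset.mem_filter] at hi
    exact le_trans hi.2 (Finset.le_sup' v (Finset.mem_univ i))
  have hlam0 : 0 ≤ lam := le_csSup hTbdd hT0
  set F := Finset.univ.filter (fun i => lam ≤ v i) with hFdef
  have hFcard : ℓ ≤ F.card := by
    by_cases hcase : (Finset.univ.filter (fun i => v i < lam)).Nonempty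
    · set m := (Finset.univ.filter (fun i => v i < lam)).sup' hcase v with hmdef
      have hmlt : m < lam := by
        rw [hmdef, Finset.sup'_lt_iff]
        intro i hi
        exact (Finset.mem_filter.mp hi).2
      obtain ⟨t, htT, hmt⟩ := exists_lt_of_lt_csSup hTne hmlt
      have htlam : t ≤ lam := le_csSup hTbdd htT
      have hsub : Finset.univ.filter (fun i => t ≤ v i) ⊆ F := by
        intro i hi
        have hti := (Finset.mem_filter.mp hi).2
        refine Finset.mem_filter.mpr ⟨Finset.mem_univ i, ?_⟩
        by_contra hlt
        push_neg at hlt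
        have : v i ≤ m := Finset.le_sup' v
          (Finset.mem_filter.mpr ⟨Finset.mem_univ i, hlt⟩)
        exact absurd (le_trans hti this) (not_le.mpr hmt)
      have := Finset.card_le_card hsub
      simp only [hTdef, Set.mem_setOf_eq, hncard] at htT
      omega
    · have : F = Finset.univ := by
        apply Finset.filter_true_of_mem
        intro i _
        by_contra hlt
        exact hcase ⟨i, Finset.mem_filter.mpr ⟨Finset.mem_univ i, not_le.mp hlt⟩⟩
      rw [this, Finset.card_univ, Fintype.card_fin]
      exact hℓn
  set B := Finset.univ.filter (fun i => ρ < v i) with hBdef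
  have hBF : B ⊆ F := by
    intro i hi
    have := (Finset.mem_filter.mp hi).2
    exact Finset.mem_filter.mpr ⟨Finset.mem_univ i, le_trans h1 this.le⟩
  have hBcard : B.card ≤ ℓ := by
    by_contra hcon
    push_neg at hcon
    have hBne : B.Nonempty := Finset.card_pos.mp (lt_of_le_of_lt (Nat.zero_le _) hcon)
    set t := B.inf' hBne v with htdef
    have htT : t ∈ T := by
      simp only [hTdef, Set.mem_setOf_eq, hncard]
      have hsub : B ⊆ Finset.univ.filter (fun i => t ≤ v i) := by
        intro i hi
        exact Finset.mem_filter.mpr ⟨Finset.mem_univ i, Finset.inf'_le v hi⟩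
      have := Finset.card_le_card hsub
      omega
    have htlam : t ≤ lam := le_csSup hTbdd htT
    have hlamt : lam < t := by
      rw [htdef, Finset.lt_inf'_iff]
      intro i hi
      exact lt_of_le_of_lt h1 (Finset.mem_filter.mp hi).2
    exact absurd htlam (not_le.mpr hlamt)
  obtain ⟨S, hBS, hSF, hScard⟩ := Finset.exists_subsuperset_card_eq hBF hBcard hFcard
  have hsum1 : ∑ i, max (v i - ρ) 0 = ∑ i ∈ S, max (v i - ρ) 0 := by
    refine (Finset.sum_subset (Finset.subset_univ S) ?_).symm
    intro i _ hiS
    have hiB : i ∉ B := fun h => hiS (hBS h)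
    have : ¬ ρ < v i := fun h => hiB (Finset.mem_filter.mpr ⟨Finset.mem_univ i, h⟩)
    push_neg at this
    exact max_eq_right (sub_nonpos.mpr this)
  have hsum2 : (ℓ : ℝ) * ρ + ∑ i ∈ S, max (v i - ρ) 0
      = ∑ i ∈ S, (ρ + max (v i - ρ) 0) := by
    rw [Finset.sum_add_distrib, Finset.sum_const, hScard, nsmul_eq_mul]
  have hterm : ∀ i ∈ S, ρ + max (v i - ρ) 0 ≤ (1 + ε) * v i := by
    intro i hiS
    have hlami : lam ≤ v i := (Finset.mem_filter.mp (hSF hiS)).2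
    have h1e : (0:ℝ) ≤ 1 + ε := by linarith
    rcases le_total (v i) ρ with hle | hle
    · rw [max_eq_right (sub_nonpos.mpr hle), add_zero]
      calc ρ ≤ (1 + ε) * lam := h2
        _ ≤ (1 + ε) * v i := mul_le_mul_of_nonneg_left hlami h1e
    · rw [max_eq_left (sub_nonneg.mpr hle)]
      have : ρ + (v i - ρ) = v i := by ring
      rw [this]
      nlinarith [hv i]
  have hSsum : ∑ i ∈ S, v i ≤ Topl ℓ v := by
    have hmem : (∑ i ∈ S, v i) ∈ {x : ℝ | ∃ S' : Finset (Fin n), S'.card = ℓ ∧ x = ∑ i ∈ S', v i} :=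
      ⟨S, hScard, rfl⟩
    have hsub : {x : ℝ | ∃ S' : Finset (Fin n), S'.card = ℓ ∧ x = ∑ i ∈ S', v i}
        ⊆ Set.range (fun S' : Finset (Fin n) => ∑ i ∈ S', v i) := by
      rintro x ⟨S', _, rfl⟩
      exact ⟨S', rfl⟩
    exact le_csSup (((Set.finite_range _).subset hsub).bddAbove) hmem
  calc (ℓ : ℝ) * ρ + ∑ i, max (v i - ρ) 0
      = ∑ i ∈ S, (ρ + max (v i - ρ) 0) := by rw [hsum1, hsum2]
    _ ≤ ∑ i ∈ S, (1 + ε) * v i := Finset.sum_le_sum hterm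
    _ = (1 + ε) * ∑ i ∈ S, v i := by rw [Finset.mul_sum]
    _ ≤ (1 + ε) * Topl ℓ v := by
        apply mul_le_mul_of_nonneg_left hSsum
        linarith
end

section
/- Let (C, d) be a finite metric space with n = |C| ≥ k ≥ 1 points. Let OPT_{kMCF} be the minimum total edge cost of a spanning forest of the complete graph on C with exactly k connected components, and let OPT_n be the optimal k-median cost min_{S⊆C, |S|≤k, S≠∅} ∑_{j∈C} d(j,S). Then OPT_{kMCF} ≤ OPT_n ≤ n · OPT_{kMCF}. -/
open Finset

noncomputable def distE {C : Type*} [MetricSpace C] : Sym2 C → ℝ :=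
  Sym2.lift ⟨fun a b => dist a b, fun a b => dist_comm a b⟩

lemma distE_mk {C : Type*} [MetricSpace C] (a b : C) : distE s(a, b) = dist a b := rfl

lemma distE_nonneg {C : Type*} [MetricSpace C] (e : Sym2 C) : 0 ≤ distE e := by
  induction e using Sym2.ind with
  | _ a b => rw [distE_mk]; exact dist_nonneg

lemma dist_le_walk_sum {C : Type*} [MetricSpace C] {G : SimpleGraph C} {u v : C}
    (p : G.Walk u v) : dist u v ≤ (p.edges.map distE).sum := by
  induction p with
  | nil => simp
  | @cons a b c h p ih =>
    simp only [SimpleGraph.Walk.edges_cons, List.map_cons, List.sum_cons, distE_mk]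
    calc dist a c ≤ dist a b + dist b c := dist_triangle a b c
    _ ≤ dist a b + (p.edges.map distE).sum := by linarith

/-- Lemma A: from a candidate center set, build a spanning forest with exactly `k`
components whose cost is at most the median cost. -/
lemma lemA {C : Type*} [Fintype C] [MetricSpace C] (k : ℕ)
    (hkn : k ≤ Fintype.card C)
    (S : Finset C) (hS : S.Nonempty) (hSk : S.card ≤ k) :
    ∃ (G : SimpleGraph C) (s : Finset (Sym2 C)),
      (↑s : Set (Sym2 C)) = G.edgeSet ∧ G.IsAcyclic ∧
      Nat.card G.ConnectedComponent = k ∧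
      (∑ e ∈ s, distE e) ≤ ∑ j : C, S.inf' hS (fun a => dist j a) := by
  classical
  obtain ⟨T, hST, hTcard⟩ := Finset.exists_superset_card_eq hSk hkn
  choose g hgS hgd using fun j : C => Finset.exists_mem_eq_inf' hS (fun a => dist j a)
  have hgT : ∀ j, g j ∈ T := fun j => hST (hgS j)
  set G : SimpleGraph C :=
    { Adj := fun a b => a ≠ b ∧ ((a ∉ T ∧ b = g a) ∨ (b ∉ T ∧ a = g b))
      symm := by
        constructor
        rintro a b ⟨hab, h | h⟩
        · exact ⟨hab.symm, Or.inr h⟩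
        · exact ⟨hab.symm, Or.inl h⟩
      loopless := ⟨fun a h => h.1 rfl⟩ } with hGdef
  have hAdj : ∀ {a b : C}, G.Adj a b ↔
      a ≠ b ∧ ((a ∉ T ∧ b = g a) ∨ (b ∉ T ∧ a = g b)) := fun {a b} => Iff.rfl
  -- unique neighbor of a vertex outside T
  have huniq : ∀ {a b : C}, a ∉ T → G.Adj a b → b = g a := by
    rintro a b ha ⟨-, ⟨-, h⟩ | ⟨-, h⟩⟩
    · exact h
    · exact absurd (h ▸ hgT b) ha
  have hneT : ∀ {a b : C}, G.Adj a b → a ∈ T → b ∉ T := by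
    rintro a b ⟨hab, ⟨ha, -⟩ | ⟨hb, -⟩⟩ haT
    · exact absurd haT ha
    · exact hb
  have hadj_g : ∀ j : C, j ∉ T → G.Adj j (g j) := by
    intro j hj
    refine ⟨fun h => hj (h ▸ hgT j), Or.inl ⟨hj, rfl⟩⟩
  -- the edge finset
  set s : Finset (Sym2 C) :=
    (Finset.univ.filter (fun j => j ∉ T)).image (fun j => s(j, g j)) with hsdef
  have hs : (↑s : Set (Sym2 C)) = G.edgeSet := by
    ext e
    induction e using Sym2.ind with
    | _ a b =>
      simp only [Finset.coe_image, Finset.coe_filter, Set.mem_image, Set.mem_setOf_eq,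
        Finset.mem_univ, true_and, SimpleGraph.mem_edgeSet, hsdef]
      constructor
      · rintro ⟨j, hj, hje⟩
        rw [Sym2.eq_iff] at hje
        rcases hje with ⟨h1, h2⟩ | ⟨h1, h2⟩
        · rw [← h1, ← h2]; exact hadj_g j hj
        · rw [← h1, ← h2]; exact (hadj_g j hj).symm
      · rintro ⟨hab, ⟨ha, hb'⟩ | ⟨hb, ha'⟩⟩
        · exact ⟨a, ha, by rw [hb']⟩
        · exact ⟨b, hb, by rw [ha']; exact Sym2.eq_swap⟩
  -- acyclicity
  have hcyc_out : ∀ (v : C), v ∉ T → ∀ (c : G.Walk v v), ¬c.IsCycle := by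
    intro v hv c hc
    obtain ⟨w, hvw, p, rfl⟩ := SimpleGraph.Walk.not_nil_iff.mp hc.not_nil
    rw [SimpleGraph.Walk.cons_isCycle_iff] at hc
    obtain ⟨hp, hes⟩ := hc
    have hwg : w = g v := huniq hv hvw
    -- the reverse of p starts at v and is not nil
    have hpr : ¬p.reverse.Nil := SimpleGraph.Walk.not_nil_of_ne (G.ne_of_adj hvw)
    obtain ⟨u, hvu, q, hq⟩ := SimpleGraph.Walk.not_nil_iff.mp hpr
    have hug : u = g v := huniq hv hvu
    have : s(v, u) ∈ p.reverse.edges := by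
      rw [hq, SimpleGraph.Walk.edges_cons]
      exact List.mem_cons_self
    rw [SimpleGraph.Walk.edges_reverse, List.mem_reverse] at this
    rw [hug, ← hwg] at this
    exact hes this
  have hac : G.IsAcyclic := by
    intro v c hc
    by_cases hv : v ∈ T
    · obtain ⟨w, hvw, p, rfl⟩ := SimpleGraph.Walk.not_nil_iff.mp hc.not_nil
      have hw : w ∉ T := hneT hvw hv
      have hwsup : w ∈ (SimpleGraph.Walk.cons hvw p).support :=
        SimpleGraph.Walk.snd_mem_support_of_mem_edges _
          (by rw [SimpleGraph.Walk.edges_cons]; exact List.mem_cons_self)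
      exact hcyc_out w hw _ (hc.rotate hwsup)
    · exact hcyc_out v hv c hc
  -- h is constant on components
  set f : C → C := fun j => if j ∈ T then j else g j with hfdef
  have hfT : ∀ j, f j ∈ T := by
    intro j; by_cases hj : j ∈ T <;> simp [hfdef, hj, hgT]
  have hfadj : ∀ a b : C, G.Adj a b → f a = f b := by
    rintro a b ⟨hab, ⟨ha, rfl⟩ | ⟨hb, rfl⟩⟩
    · simp [hfdef, ha, hgT a]
    · simp [hfdef, hb, hgT b]
  have hfwalk : ∀ (a b : C) (p : G.Walk a b), f a = f b := by
    intro a b p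
    induction p with
    | nil => rfl
    | cons h _ ih => exact (hfadj _ _ h).trans ih
  -- bijection between components and T
  set φ : G.ConnectedComponent → C :=
    SimpleGraph.ConnectedComponent.lift f (fun a b p _ => hfwalk a b p) with hφdef
  have hφmk : ∀ j : C, φ (G.connectedComponentMk j) = f j := fun _ => rfl
  have hequiv : G.ConnectedComponent ≃ {x // x ∈ T} :=
    { toFun := fun c => ⟨φ c, by
        induction c using SimpleGraph.ConnectedComponent.ind with
        | _ j => exact hφmk j ▸ hfT j⟩
      invFun := fun t => G.connectedComponentMk t.1
      left_inv := by
        intro c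
        induction c using SimpleGraph.ConnectedComponent.ind with
        | _ j =>
          simp only [hφmk]
          by_cases hj : j ∈ T
          · simp [hfdef, hj]
          · have : f j = g j := by simp [hfdef, hj]
            rw [this]
            exact (SimpleGraph.ConnectedComponent.connectedComponentMk_eq_of_adj
              (hadj_g j hj)).symm
      right_inv := by
        rintro ⟨t, ht⟩
        apply Subtype.ext
        simp only [hφmk]
        simp [hfdef, ht] }
  have hcard : Nat.card G.ConnectedComponent = k := by
    rw [Nat.card_congr hequiv, Nat.card_eq_fintype_card, Fintype.card_coe, hTcard]
  refine ⟨G, s, hs, hac, hcard, ?_⟩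
  -- cost bound
  have hinj : Set.InjOn (fun j => s(j, g j))
      ↑(Finset.univ.filter (fun j : C => j ∉ T)) := by
    intro a ha b hb hab
    simp only [Finset.coe_filter, Set.mem_setOf_eq] at ha hb
    rw [Sym2.eq_iff] at hab
    rcases hab with ⟨h1, -⟩ | ⟨h1, h2⟩
    · exact h1
    · exact absurd (h1 ▸ hgT b) ha.2
  rw [hsdef, Finset.sum_image fun a ha b hb h =>
    hinj (Finset.mem_coe.mpr ha) (Finset.mem_coe.mpr hb) h]
  have : ∀ j : C, distE s(j, g j) = S.inf' hS (fun a => dist j a) := by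
    intro j; rw [distE_mk, hgd j]
  calc ∑ j ∈ Finset.univ.filter (fun j : C => j ∉ T), distE s(j, g j)
      = ∑ j ∈ Finset.univ.filter (fun j : C => j ∉ T), S.inf' hS (fun a => dist j a) := by
        exact Finset.sum_congr rfl fun j _ => this j
    _ ≤ ∑ j : C, S.inf' hS (fun a => dist j a) := by
        apply Finset.sum_le_sum_of_subset_of_nonneg (Finset.filter_subset _ _)
        intro j _ _
        exact Finset.le_inf' hS _ fun a _ => dist_nonneg

/-- Lemma B: from a forest with `k` components, extract a center set whose median cost
is at most `n` times the forest cost. -/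
lemma lemB {C : Type*} [Fintype C] [MetricSpace C] [Nonempty C] (k : ℕ)
    (G : SimpleGraph C) (s : Finset (Sym2 C)) (hs : (↑s : Set (Sym2 C)) = G.edgeSet)
    (hcard : Nat.card G.ConnectedComponent = k) :
    ∃ (S : Finset C) (hS : S.Nonempty), S.card ≤ k ∧
      ∑ j : C, S.inf' hS (fun a => dist j a) ≤ (Fintype.card C : ℝ) * ∑ e ∈ s, distE e := by
  classical
  haveI : Finite G.ConnectedComponent := Quot.finite _
  haveI : Fintype G.ConnectedComponent := Fintype.ofFinite _
  have hout : ∀ c : G.ConnectedComponent, ∃ v : C, G.connectedComponentMk v = c :=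
    fun c => Quot.exists_rep c
  choose out' hout' using hout
  set rep : C → C := fun j => out' (G.connectedComponentMk j) with hrepdef
  set S : Finset C := Finset.univ.image rep with hSdef
  have hS : S.Nonempty := Finset.Nonempty.image Finset.univ_nonempty _
  have hSsub : S ⊆ (Finset.univ : Finset G.ConnectedComponent).image out' := by
    intro x hx
    rw [hSdef, Finset.mem_image] at hx
    obtain ⟨j, -, rfl⟩ := hx
    exact Finset.mem_image.mpr ⟨G.connectedComponentMk j, Finset.mem_univ _, rfl⟩
  have hScard : S.card ≤ k := by
    calc S.card ≤ ((Finset.univ : Finset G.ConnectedComponent).image out').card :=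
          Finset.card_le_card hSsub
      _ ≤ (Finset.univ : Finset G.ConnectedComponent).card := Finset.card_image_le
      _ = Fintype.card G.ConnectedComponent := Finset.card_univ
      _ = Nat.card G.ConnectedComponent := (Nat.card_eq_fintype_card).symm
      _ = k := hcard
  refine ⟨S, hS, hScard, ?_⟩
  have key : ∀ j : C, S.inf' hS (fun a => dist j a) ≤ ∑ e ∈ s, distE e := by
    intro j
    have hrepS : rep j ∈ S := Finset.mem_image.mpr ⟨j, Finset.mem_univ _, rfl⟩
    have h1 : S.inf' hS (fun a => dist j a) ≤ dist j (rep j) :=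
      Finset.inf'_le _ hrepS
    have hreach : G.Reachable j (rep j) := by
      apply SimpleGraph.ConnectedComponent.exact
      exact (hout' (G.connectedComponentMk j)).symm
    obtain ⟨p⟩ := hreach
    have h2 : dist j (rep j) ≤ (p.bypass.edges.map distE).sum := dist_le_walk_sum _
    have hnodup : p.bypass.edges.Nodup := p.bypass_isPath.isTrail.edges_nodup
    have h3 : (p.bypass.edges.map distE).sum = ∑ e ∈ p.bypass.edges.toFinset, distE e :=
      (List.sum_toFinset _ hnodup).symm
    have h4 : p.bypass.edges.toFinset ⊆ s := by
      intro e he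
      rw [List.mem_toFinset] at he
      have := p.bypass.edges_subset_edgeSet he
      rwa [← hs] at this
    have h5 : ∑ e ∈ p.bypass.edges.toFinset, distE e ≤ ∑ e ∈ s, distE e :=
      Finset.sum_le_sum_of_subset_of_nonneg h4 fun e _ _ => distE_nonneg e
    calc S.inf' hS (fun a => dist j a) ≤ dist j (rep j) := h1
      _ ≤ (p.bypass.edges.map distE).sum := h2
      _ = ∑ e ∈ p.bypass.edges.toFinset, distE e := h3
      _ ≤ ∑ e ∈ s, distE e := h5
  calc ∑ j : C, S.inf' hS (fun a => dist j a) ≤ ∑ _j : C, ∑ e ∈ s, distE e :=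
        Finset.sum_le_sum fun j _ => key j
    _ = (Fintype.card C : ℝ) * ∑ e ∈ s, distE e := by
        rw [Finset.sum_const, Finset.card_univ, nsmul_eq_mul]

theorem stmt4 {C : Type*} [Fintype C] [MetricSpace C] (n k : ℕ)
    (hn : n = Fintype.card C) (hk : 1 ≤ k) (hkn : k ≤ n)
    (OPTkMCF OPTn : ℝ)
    (hF : OPTkMCF = sInf {x : ℝ | ∃ (G : SimpleGraph C) (s : Finset (Sym2 C)),
      (↑s : Set (Sym2 C)) = G.edgeSet ∧ G.IsAcyclic ∧
      Nat.card G.ConnectedComponent = k ∧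
      x = ∑ e ∈ s, Sym2.lift ⟨fun a b => dist a b, fun a b => dist_comm a b⟩ e})
    (hM : OPTn = sInf {x : ℝ | ∃ (S : Finset C) (hS : S.Nonempty),
      S.card ≤ k ∧ x = ∑ j : C, S.inf' hS (fun a => dist j a)}) :
    OPTkMCF ≤ OPTn ∧ OPTn ≤ (n : ℝ) * OPTkMCF := by
  classical
  have hC : 0 < Fintype.card C := lt_of_lt_of_le hk (hn ▸ hkn)
  haveI : Nonempty C := Fintype.card_pos_iff.mp hC
  have hkn' : k ≤ Fintype.card C := hn ▸ hkn
  set Fset : Set ℝ := {x : ℝ | ∃ (G : SimpleGraph C) (s : Finset (Sym2 C)),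
      (↑s : Set (Sym2 C)) = G.edgeSet ∧ G.IsAcyclic ∧
      Nat.card G.ConnectedComponent = k ∧
      x = ∑ e ∈ s, Sym2.lift ⟨fun a b => dist a b, fun a b => dist_comm a b⟩ e} with hFset
  set Mset : Set ℝ := {x : ℝ | ∃ (S : Finset C) (hS : S.Nonempty),
      S.card ≤ k ∧ x = ∑ j : C, S.inf' hS (fun a => dist j a)} with hMset
  have hFbdd : BddBelow Fset := by
    refine ⟨0, ?_⟩
    rintro x ⟨G, s, -, -, -, rfl⟩
    exact Finset.sum_nonneg fun e _ => distE_nonneg e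
  have hMbdd : BddBelow Mset := by
    refine ⟨0, ?_⟩
    rintro x ⟨S, hS, -, rfl⟩
    exact Finset.sum_nonneg fun j _ =>
      Finset.le_inf' hS _ fun a _ => dist_nonneg
  -- singleton center set: a member of Mset
  obtain ⟨c⟩ := (inferInstance : Nonempty C)
  have hsing : ({c} : Finset C).Nonempty := Finset.singleton_nonempty c
  have hMne : Mset.Nonempty :=
    ⟨_, ⟨{c}, hsing, by simpa using hk, rfl⟩⟩
  have hFne : Fset.Nonempty := by
    obtain ⟨G, s, h1, h2, h3, _⟩ := lemA k hkn' {c} hsing (by simpa using hk)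
    exact ⟨_, G, s, h1, h2, h3, rfl⟩
  constructor
  · rw [hF, hM]
    apply le_csInf hMne
    rintro x ⟨S, hS, hcard, rfl⟩
    obtain ⟨G, s, h1, h2, h3, hle⟩ := lemA k hkn' S hS hcard
    exact le_trans (csInf_le hFbdd ⟨G, s, h1, h2, h3, rfl⟩) hle
  · rw [hF, hM]
    have hn0 : (0 : ℝ) < n := by
      exact_mod_cast lt_of_lt_of_le Nat.zero_lt_one (hk.trans hkn)
    have key : ∀ y ∈ Fset, sInf Mset ≤ (n : ℝ) * y := by
      rintro y ⟨G, s, h1, -, h3, rfl⟩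
      obtain ⟨S, hS, hcard, hle⟩ := lemB k G s h1 h3
      refine le_trans (csInf_le hMbdd ⟨S, hS, hcard, rfl⟩) ?_
      rw [hn]
      exact hle
    have hdiv : sInf Mset / (n : ℝ) ≤ sInf Fset := by
      apply le_csInf hFne
      intro y hy
      rw [div_le_iff₀ hn0]
      rw [mul_comm]
      exact key y hy
    rw [div_le_iff₀ hn0] at hdiv
    rw [mul_comm]
    exact hdiv
end

section
/- Let (C, d) be a finite metric space, k ≥ 1, ℓ ≤ |C|, and let OPT = min_{|T|≤k} Top_ℓ(d(C,T)). Suppose S ⊆ C satisfies Top_ℓ(d(C,S)) ≤ α·OPT. Form the weighted instance where each point j ∈ C is moved to its nearest point of S (ties broken arbitrarily): each i ∈ S receives weight w_i equal to the number of points of C assigned to it. Let OPT' be the optimal ℓ-centrum value of this weighted instance (where a point of weight w counts as w co-located agents). Then OPT' ≤ 2(α + 1)·OPT. -/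
open Finset

lemma Topl_set_finite {ι : Type*} [Fintype ι] (ℓ : ℕ) (v : ι → ℝ) :
    {x : ℝ | ∃ S : Finset ι, S.card = ℓ ∧ x = ∑ i ∈ S, v i}.Finite := by
  apply Set.Finite.subset (Set.finite_range (fun S : Finset ι => ∑ i ∈ S, v i))
  rintro x ⟨s, _, rfl⟩; exact ⟨s, rfl⟩

lemma Topl_set_nonempty {ι : Type*} [Fintype ι] {ℓ : ℕ} (hℓ : ℓ ≤ Fintype.card ι)
    (v : ι → ℝ) :
    {x : ℝ | ∃ S : Finset ι, S.card = ℓ ∧ x = ∑ i ∈ S, v i}.Nonempty := by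
  obtain ⟨s, -, hcard⟩ := Finset.exists_subset_card_eq (s := (univ : Finset ι)) (n := ℓ) (by simpa)
  exact ⟨∑ i ∈ s, v i, s, hcard, rfl⟩

lemma Topl_le_add {ι : Type*} [Fintype ι] {ℓ : ℕ} (hℓ : ℓ ≤ Fintype.card ι)
    {w u v : ι → ℝ} (h : ∀ j, w j ≤ u j + v j) :
    Topl ℓ w ≤ Topl ℓ u + Topl ℓ v := by
  apply csSup_le (Topl_set_nonempty hℓ w)
  rintro x ⟨s, hs, rfl⟩
  calc ∑ i ∈ s, w i ≤ ∑ i ∈ s, (u i + v i) := Finset.sum_le_sum fun i _ => h i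
    _ = (∑ i ∈ s, u i) + ∑ i ∈ s, v i := Finset.sum_add_distrib
    _ ≤ Topl ℓ u + Topl ℓ v := add_le_add
        (le_csSup (Topl_set_finite ℓ u).bddAbove ⟨s, hs, rfl⟩)
        (le_csSup (Topl_set_finite ℓ v).bddAbove ⟨s, hs, rfl⟩)

lemma Topl_nonneg {ι : Type*} [Fintype ι] {ℓ : ℕ} (hℓ : ℓ ≤ Fintype.card ι)
    {v : ι → ℝ} (hv : ∀ j, 0 ≤ v j) : 0 ≤ Topl ℓ v := by
  obtain ⟨s, -, hcard⟩ := Finset.exists_subset_card_eq (s := (univ : Finset ι)) (n := ℓ) (by simpa)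
  calc (0:ℝ) ≤ ∑ i ∈ s, v i := Finset.sum_nonneg fun i _ => hv i
    _ ≤ Topl ℓ v := le_csSup (Topl_set_finite ℓ v).bddAbove ⟨s, hcard, rfl⟩

theorem stmt6 {C : Type*} [Fintype C] [MetricSpace C] (k ℓ : ℕ)
    (hk : 1 ≤ k) (hℓ1 : 1 ≤ ℓ) (hℓ : ℓ ≤ Fintype.card C) (α : ℝ)
    (S : Finset C) (hS : S.Nonempty)
    -- σ assigns each point to a nearest point of S (ties broken arbitrarily)
    (σ : C → C) (hσmem : ∀ j, σ j ∈ S)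
    (hσnear : ∀ j, dist j (σ j) = S.inf' hS (fun a => dist j a))
    (OPT : ℝ)
    (hOPT : OPT = sInf {x : ℝ | ∃ (T : Finset C) (hT : T.Nonempty),
      T.card ≤ k ∧ x = Topl ℓ (fun j => T.inf' hT (fun a => dist j a))})
    -- S is an α-approximate ℓ-centrum solution
    (hScost : Topl ℓ (fun j => S.inf' hS (fun a => dist j a)) ≤ α * OPT)
    -- OPT' : optimal ℓ-centrum value of the weighted instance (each agent j moved to σ j)
    (OPT' : ℝ)
    (hOPT' : OPT' = sInf {x : ℝ | ∃ (T : Finset C) (hT : T.Nonempty),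
      T.card ≤ k ∧ x = Topl ℓ (fun j => T.inf' hT (fun a => dist (σ j) a))}) :
    OPT' ≤ 2 * (α + 1) * OPT := by
  -- The set defining OPT is finite and nonempty, so the inf is attained
  have hCne : Nonempty C := Fintype.card_pos_iff.mp (lt_of_lt_of_le hℓ1 hℓ)
  obtain ⟨c0⟩ := hCne
  have hfin1 : {x : ℝ | ∃ (T : Finset C) (hT : T.Nonempty),
      T.card ≤ k ∧ x = Topl ℓ (fun j => T.inf' hT (fun a => dist j a))}.Finite := by
    apply Set.Finite.subset (Set.finite_range
      (fun T : {T : Finset C // T.Nonempty} =>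
        Topl ℓ (fun j => T.1.inf' T.2 (fun a => dist j a))))
    rintro x ⟨T, hT, -, rfl⟩; exact ⟨⟨T, hT⟩, rfl⟩
  have hne1 : {x : ℝ | ∃ (T : Finset C) (hT : T.Nonempty),
      T.card ≤ k ∧ x = Topl ℓ (fun j => T.inf' hT (fun a => dist j a))}.Nonempty :=
    ⟨_, {c0}, Finset.singleton_nonempty c0, by simpa using hk, rfl⟩
  have hmem := Set.Nonempty.csInf_mem hne1 hfin1
  rw [← hOPT] at hmem
  obtain ⟨T, hT, hTk, hOPTval⟩ := hmem
  -- OPT ≥ 0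
  have hOPTnn : 0 ≤ OPT := by
    rw [hOPTval]
    exact Topl_nonneg hℓ fun j => Finset.le_inf' hT _ fun b _ => dist_nonneg
  -- α * OPT ≥ 0
  have hαOPTnn : 0 ≤ α * OPT := le_trans
    (Topl_nonneg hℓ fun j => Finset.le_inf' hS _ fun b _ => dist_nonneg) hScost
  -- key pointwise bound
  have hpt : ∀ j, T.inf' hT (fun a => dist (σ j) a) ≤
      S.inf' hS (fun a => dist j a) + T.inf' hT (fun a => dist j a) := by
    intro j
    obtain ⟨a, haT, ha⟩ := Finset.exists_mem_eq_inf' hT (fun a => dist j a)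
    calc T.inf' hT (fun a => dist (σ j) a) ≤ dist (σ j) a := Finset.inf'_le _ haT
      _ ≤ dist (σ j) j + dist j a := dist_triangle _ _ _
      _ = S.inf' hS (fun a => dist j a) + T.inf' hT (fun a => dist j a) := by
          rw [dist_comm, hσnear j, ← ha]
  -- OPT' ≤ Topl of the σ-instance w.r.t. T
  have hle : OPT' ≤ Topl ℓ (fun j => T.inf' hT (fun a => dist (σ j) a)) := by
    rw [hOPT']
    have hfin2 : {x : ℝ | ∃ (T : Finset C) (hT : T.Nonempty),
        T.card ≤ k ∧ x = Topl ℓ (fun j => T.inf' hT (fun a => dist (σ j) a))}.Finite := by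
      apply Set.Finite.subset (Set.finite_range
        (fun T : {T : Finset C // T.Nonempty} =>
          Topl ℓ (fun j => T.1.inf' T.2 (fun a => dist (σ j) a))))
      rintro x ⟨T, hT, -, rfl⟩; exact ⟨⟨T, hT⟩, rfl⟩
    exact csInf_le hfin2.bddBelow ⟨T, hT, hTk, rfl⟩
  have hsub := Topl_le_add hℓ hpt
  have : OPT' ≤ α * OPT + OPT := by
    calc OPT' ≤ _ := hle
      _ ≤ _ := hsub
      _ ≤ α * OPT + OPT := add_le_add hScost (le_of_eq hOPTval.symm)
  nlinarith
end

section
/- Let (C, d) be a finite metric space where each i ∈ C has integer weight w_i ≥ 0 with ∑_i w_i = n, and set w'_i = min{w_i, ℓ}. Let B, α, ε > 0 with B a parameter, and suppose d̃ : C × C → ℝ_{≥0} is a metric such that for all i, j ∈ C with d(i,j) ≤ B_{i,0} (where B_{i,0} is any threshold with B_{i,0} ≥ B/w'_i) we have d(i,j) − κ_i ≤ d̃(i,j) ≤ (1+ε)·d(i,j) + κ_i, with κ_i = εB/(α w'_i n). If T ⊆ C satisfies d(i,T) ≤ B_{i,0} for all i ∈ C and OPT(d) denotes the optimal ℓ-centrum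 value for d with OPT(d) ≥ B/α, then Top_ℓ(d̃(C,T|w)) ≤ (1+ε)·Top_ℓ(d(C,T|w)) + ε·OPT(d). -/
open Finset

/-- `wTopl ℓ w v` : Top-ℓ value of the weighted vector having `w i` coordinates of
value `v i` for each `i`, expressed as the maximum over choices of `ℓ` agents
(with multiplicities respecting the weights) of the chosen total. -/
noncomputable def wTopl {ι : Type*} [Fintype ι] (ℓ : ℕ) (w : ι → ℕ) (v : ι → ℝ) : ℝ :=
  sSup {x : ℝ | ∃ γ : ι → ℕ, (∀ i, γ i ≤ w i) ∧ (∑ i, γ i) = ℓ ∧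
    x = ∑ i, (γ i : ℝ) * v i}

lemma exists_gamma' {ι : Type*} [Fintype ι] (w : ι → ℕ) :
    ∀ ℓ : ℕ, ℓ ≤ ∑ i, w i → ∃ γ : ι → ℕ, (∀ i, γ i ≤ w i) ∧ ∑ i, γ i = ℓ := by
  classical
  intro ℓ
  induction ℓ with
  | zero => intro _; exact ⟨fun _ => 0, fun _ => Nat.zero_le _, by simp⟩
  | succ m ih =>
    intro h
    obtain ⟨γ, hγ, hs⟩ := ih (Nat.le_of_succ_le h)
    have hex : ∃ i, γ i < w i := by
      by_contra hc
      push_neg at hc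
      have : ∑ i, w i ≤ ∑ i, γ i := Finset.sum_le_sum fun i _ => hc i
      omega
    obtain ⟨i0, hi0⟩ := hex
    refine ⟨Function.update γ i0 (γ i0 + 1), ?_, ?_⟩
    · intro i
      rcases eq_or_ne i i0 with rfl | hne
      · simp; omega
      · simp [Function.update_of_ne hne]; exact hγ i
    · rw [Finset.sum_update_of_mem (Finset.mem_univ _)]
      rw [← Finset.add_sum_erase _ γ (Finset.mem_univ i0)] at hs
      rw [show Finset.univ \ {i0} = Finset.univ.erase i0 by
        ext; simp [Finset.mem_erase, and_comm]]
      omega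

lemma bdd_wTopl {ι : Type*} [Fintype ι] (ℓ : ℕ) (w : ι → ℕ) (v : ι → ℝ) :
    BddAbove {x : ℝ | ∃ γ : ι → ℕ, (∀ i, γ i ≤ w i) ∧ (∑ i, γ i) = ℓ ∧
      x = ∑ i, (γ i : ℝ) * v i} := by
  refine ⟨∑ i, (w i : ℝ) * |v i|, ?_⟩
  rintro x ⟨γ, hγ, -, rfl⟩
  refine Finset.sum_le_sum fun i _ => ?_
  calc (γ i : ℝ) * v i ≤ (γ i : ℝ) * |v i| := by
        exact mul_le_mul_of_nonneg_left (le_abs_self _) (by positivity)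
    _ ≤ (w i : ℝ) * |v i| := by
        exact mul_le_mul_of_nonneg_right (by exact_mod_cast hγ i) (abs_nonneg _)

theorem stmt8 {C : Type*} [Fintype C] [MetricSpace C] (n k ℓ : ℕ)
    (hk : 1 ≤ k) (hℓ1 : 1 ≤ ℓ) (hℓn : ℓ ≤ n)
    (w : C → ℕ) (hw : ∑ i : C, w i = n)
    (B α ε : ℝ) (hB : 0 < B) (hα : 0 < α) (hε : 0 < ε)
    -- thresholds B_{i,0} with B_{i,0} ≥ B / w'_i, where w'_i = min{w_i, ℓ}
    (B0 : C → ℝ) (hB0 : ∀ i, B / ((min (w i) ℓ : ℕ) : ℝ) ≤ B0 i)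
    -- d̃ is a metric on C
    (dt : C → C → ℝ) (hdtnn : ∀ i j, 0 ≤ dt i j) (hdtsymm : ∀ i j, dt i j = dt j i)
    (hdtself : ∀ i, dt i i = 0) (hdttri : ∀ i j l, dt i l ≤ dt i j + dt j l)
    -- d̃ approximates d on pairs of distance ≤ B_{i,0}, with κ_i = εB/(α w'_i n)
    (hclose : ∀ i j, dist i j ≤ B0 i →
      dist i j - ε * B / (α * ((min (w i) ℓ : ℕ) : ℝ) * (n : ℝ)) ≤ dt i j ∧
      dt i j ≤ (1 + ε) * dist i j + ε * B / (α * ((min (w i) ℓ : ℕ) : ℝ) * (n : ℝ)))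
    -- OPT(d) : optimal weighted ℓ-centrum value for metric d
    (OPTd : ℝ)
    (hOPTd : OPTd = sInf {x : ℝ | ∃ (T' : Finset C) (hT' : T'.Nonempty),
      T'.card ≤ k ∧ x = wTopl ℓ w (fun i => T'.inf' hT' (fun a => dist i a))})
    (hBopt : B ≤ α * OPTd)
    (T : Finset C) (hT : T.Nonempty)
    (hTB : ∀ i, T.inf' hT (fun a => dist i a) ≤ B0 i) :
    wTopl ℓ w (fun i => T.inf' hT (fun a => dt i a)) ≤
      (1 + ε) * wTopl ℓ w (fun i => T.inf' hT (fun a => dist i a)) + ε * OPTd := by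
  have hn : 0 < (n : ℝ) := by exact_mod_cast lt_of_lt_of_le hℓ1 hℓn
  have hOPT : 0 < OPTd := by
    by_contra hc
    push_neg at hc
    nlinarith
  -- per-agent bound
  have key : ∀ i : C, T.inf' hT (fun a => dt i a) ≤
      (1 + ε) * T.inf' hT (fun a => dist i a) +
        ε * B / (α * ((min (w i) ℓ : ℕ) : ℝ) * (n : ℝ)) := by
    intro i
    obtain ⟨a, ha, hae⟩ := T.exists_mem_eq_inf' hT (fun a => dist i a)
    have h1 : dist i a ≤ B0 i := by rw [← hae]; exact hTB i
    have h2 := (hclose i a h1).2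
    calc T.inf' hT (fun a => dt i a) ≤ dt i a := Finset.inf'_le _ ha
      _ ≤ (1 + ε) * dist i a + ε * B / (α * ((min (w i) ℓ : ℕ) : ℝ) * (n : ℝ)) := h2
      _ = _ := by rw [hae]
  -- the set for dt is nonempty
  have hℓw : ℓ ≤ ∑ i, w i := by omega
  obtain ⟨γ0, hγ0, hγ0s⟩ := exists_gamma' w ℓ hℓw
  rw [wTopl]
  have hne : {x : ℝ | ∃ γ : C → ℕ, (∀ i, γ i ≤ w i) ∧ (∑ i, γ i) = ℓ ∧
      x = ∑ i, (γ i : ℝ) * T.inf' hT (fun a => dt i a)}.Nonempty :=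
    ⟨_, γ0, hγ0, hγ0s, rfl⟩
  apply csSup_le hne
  rintro x ⟨γ, hγ, hγs, rfl⟩
  have hγℓ : ∀ i, γ i ≤ ℓ := fun i =>
    hγs ▸ Finset.single_le_sum (fun j _ => Nat.zero_le (γ j)) (Finset.mem_univ i)
  have hsum : ∑ i, (γ i : ℝ) * T.inf' hT (fun a => dt i a) ≤
      ∑ i, ((γ i : ℝ) * ((1 + ε) * T.inf' hT (fun a => dist i a)) +
        (γ i : ℝ) * (ε * B / (α * ((min (w i) ℓ : ℕ) : ℝ) * (n : ℝ)))) := by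
    refine Finset.sum_le_sum fun i _ => ?_
    rw [← mul_add]
    exact mul_le_mul_of_nonneg_left (key i) (by positivity)
  rw [Finset.sum_add_distrib] at hsum
  have h1 : ∑ i, (γ i : ℝ) * ((1 + ε) * T.inf' hT (fun a => dist i a)) =
      (1 + ε) * ∑ i, (γ i : ℝ) * T.inf' hT (fun a => dist i a) := by
    rw [Finset.mul_sum]; congr 1; ext i; ring
  have h2 : ∑ i, (γ i : ℝ) * T.inf' hT (fun a => dist i a) ≤
      wTopl ℓ w (fun i => T.inf' hT (fun a => dist i a)) :=
    le_csSup (bdd_wTopl ℓ w _) ⟨γ, hγ, hγs, rfl⟩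
  have h3 : ∑ i, (γ i : ℝ) * (ε * B / (α * ((min (w i) ℓ : ℕ) : ℝ) * (n : ℝ))) ≤
      ε * OPTd := by
    have hterm : ∀ i : C, (γ i : ℝ) * (ε * B / (α * ((min (w i) ℓ : ℕ) : ℝ) * (n : ℝ)))
        ≤ (γ i : ℝ) * (ε * OPTd / (n : ℝ)) := by
      intro i
      rcases Nat.eq_zero_or_pos (min (w i) ℓ) with h0 | hpos
      · have : γ i = 0 := by
          have := hγ i; have := hγℓ i; omega
        simp [this]
      · have hw' : (1 : ℝ) ≤ ((min (w i) ℓ : ℕ) : ℝ) := by exact_mod_cast hpos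
        refine mul_le_mul_of_nonneg_left ?_ (by positivity)
        rw [div_le_div_iff₀ (by positivity) hn]
        have h5 : ε * B ≤ ε * (α * OPTd) := by nlinarith
        have hpos2 : (0:ℝ) ≤ ε * OPTd * α * (n : ℝ) := by positivity
        nlinarith [mul_le_mul_of_nonneg_left hw' hpos2,
          mul_le_mul_of_nonneg_right h5 hn.le]
    calc ∑ i, (γ i : ℝ) * (ε * B / (α * ((min (w i) ℓ : ℕ) : ℝ) * (n : ℝ)))
        ≤ ∑ i, (γ i : ℝ) * (ε * OPTd / (n : ℝ)) := Finset.sum_le_sum fun i _ => hterm i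
      _ = (ℓ : ℝ) * (ε * OPTd / (n : ℝ)) := by
          rw [← Finset.sum_mul]
          congr 1
          exact_mod_cast congrArg Nat.cast hγs
      _ ≤ (n : ℝ) * (ε * OPTd / (n : ℝ)) := by
          refine mul_le_mul_of_nonneg_right (by exact_mod_cast hℓn) (by positivity)
      _ = ε * OPTd := by field_simp
  calc ∑ i, (γ i : ℝ) * T.inf' hT (fun a => dt i a)
      ≤ _ := hsum
    _ ≤ (1 + ε) * wTopl ℓ w (fun i => T.inf' hT (fun a => dist i a)) + ε * OPTd := by
        rw [h1]
        have := mul_le_mul_of_nonneg_left h2 (by linarith : (0:ℝ) ≤ 1 + ε)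
        linarith
end

section
/- Let (C,d) be a finite metric space, S* = {c*_1,…,c*_k} an optimal ℓ-centrum solution with induced clusters C*_1,…,C*_k, and S the current center set. Fix parameters t_ℓ ≥ 0, β = 2, α = 3, γ = 4. Define r_ℓ(C*_q) = (∑_{j∈C*_q} (d(j,c*_q) − t_ℓ)^+)/|C*_q| and the core of an ℓ-far cluster as {j ∈ C*_q : (d(j,c*_q) − t_ℓ)^+ ≤ α·r_ℓ(C*_q)}. If S contains a point s with (d(s,c*_q) − t_ℓ)^+ ≤ α·r_ℓ(C*_q), then ∑_{j∈C*_q}(d(j,s) − β·t_ℓ)^+ ≤ (1+α)·∑_{j∈C*_q}(d(j,c*_q) − t_ℓ)^+. -/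
open Finset

theorem stmt9 {C : Type*} [Fintype C] [MetricSpace C]
    (Cq : Finset C) (hCq : Cq.Nonempty) (cq : C) (tℓ : ℝ) (htℓ : 0 ≤ tℓ)
    (S : Finset C) (s : C) (hs : s ∈ S)
    -- r_ℓ(C*_q), the radius of the cluster
    (r : ℝ) (hr : r = (∑ j ∈ Cq, max (dist j cq - tℓ) 0) / (Cq.card : ℝ))
    -- s lies in the core of the cluster (α = 3)
    (hcore : max (dist s cq - tℓ) 0 ≤ 3 * r) :
    -- goodness with β = 2, bound (1 + α) = (1 + 3)
    ∑ j ∈ Cq, max (dist j s - 2 * tℓ) 0 ≤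
      (1 + 3) * ∑ j ∈ Cq, max (dist j cq - tℓ) 0 := by
  have key : ∀ j ∈ Cq, max (dist j s - 2 * tℓ) 0 ≤
      max (dist j cq - tℓ) 0 + max (dist s cq - tℓ) 0 := by
    intro j _
    have htri : dist j s ≤ dist j cq + dist s cq := dist_triangle_right j s cq
    rcases le_total (dist j s - 2 * tℓ) 0 with h | h
    · simp [max_eq_right h]
      positivity
    · rw [max_eq_left h]
      have h1 : dist j cq - tℓ ≤ max (dist j cq - tℓ) 0 := le_max_left _ _
      have h2 : dist s cq - tℓ ≤ max (dist s cq - tℓ) 0 := le_max_left _ _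
      linarith
  calc ∑ j ∈ Cq, max (dist j s - 2 * tℓ) 0
      ≤ ∑ j ∈ Cq, (max (dist j cq - tℓ) 0 + max (dist s cq - tℓ) 0) :=
        Finset.sum_le_sum key
    _ = (∑ j ∈ Cq, max (dist j cq - tℓ) 0) + (Cq.card : ℝ) * max (dist s cq - tℓ) 0 := by
        rw [Finset.sum_add_distrib, Finset.sum_const, nsmul_eq_mul]
    _ ≤ (∑ j ∈ Cq, max (dist j cq - tℓ) 0) + (Cq.card : ℝ) * (3 * r) := by
        have hc : (0:ℝ) ≤ (Cq.card : ℝ) := Nat.cast_nonneg _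
        nlinarith
    _ = (1 + 3) * ∑ j ∈ Cq, max (dist j cq - tℓ) 0 := by
        have hc : (0:ℝ) < (Cq.card : ℝ) := by
          exact_mod_cast Finset.card_pos.mpr hCq
        rw [hr]
        field_simp
end

section
/- Let (C,d) be a finite metric space with clusters C*_1,…,C*_k partitioning C, centers c*_q, and current center set S. Fix t_ℓ with t*_ℓ ≤ t_ℓ ≤ max{(1+ε)t*_ℓ, ε·OPT/ℓ}, where t*_ℓ is the ℓ-th largest value of d(j,S*) over j ∈ C and OPT = Top_ℓ(d(C,S*)). Suppose every cluster C*_q is ℓ-good, i.e., ∑_{j∈C*_q}(d(j,S) − 2t_ℓ)^+ ≤ γ·∑_{j∈C*_q}(d(j,c*_q) − t_ℓ)^+ with γ ≥ 2. Then Top_ℓ(d(C,S)) ≤ (1+ε)·γ·Top_ℓ(d(C,S*)). -/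
open Finset

section helpers
variable {ι : Type*} [Fintype ι] (ℓ : ℕ) (v : ι → ℝ)

lemma topl_bddAbove : BddAbove {x : ℝ | ∃ S : Finset ι, S.card = ℓ ∧ x = ∑ i ∈ S, v i} := by
  apply Set.Finite.bddAbove
  apply (Set.finite_range (fun S : Finset ι => ∑ i ∈ S, v i)).subset
  rintro x ⟨T, -, rfl⟩; exact ⟨T, rfl⟩

lemma le_topl {T : Finset ι} (hT : T.card = ℓ) : ∑ i ∈ T, v i ≤ Topl ℓ v :=
  le_csSup (topl_bddAbove ℓ v) ⟨T, hT, rfl⟩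

lemma topl_le (hℓ : ℓ ≤ Fintype.card ι) {B : ℝ}
    (h : ∀ T : Finset ι, T.card = ℓ → ∑ i ∈ T, v i ≤ B) : Topl ℓ v ≤ B := by
  obtain ⟨T, -, hT⟩ := Finset.exists_subset_card_eq (s := (univ : Finset ι)) (n := ℓ) (by simpa using hℓ)
  exact csSup_le ⟨_, T, hT, rfl⟩ (by rintro x ⟨U, hU, rfl⟩; exact h U hU)

lemma ncard_eq (t : ℝ) : {i | t ≤ v i}.ncard = (univ.filter (fun i => t ≤ v i)).card := by
  rw [show {i | t ≤ v i} = ↑(univ.filter (fun i => t ≤ v i)) by ext i; simp,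
    Set.ncard_coe_finset]

lemma nthLargest_spec (hℓ1 : 1 ≤ ℓ) (hℓn : ℓ ≤ Fintype.card ι) (hv : ∀ i, 0 ≤ v i) :
    0 ≤ nthLargest ℓ v ∧ ∃ T : Finset ι, T.card = ℓ ∧
      (∀ i ∈ T, nthLargest ℓ v ≤ v i) ∧ (∀ i ∉ T, v i ≤ nthLargest ℓ v) := by
  classical
  set N := {t : ℝ | ℓ ≤ {i | t ≤ v i}.ncard} with hN
  have hιne : (univ : Finset ι).Nonempty := by
    rw [← Finset.card_pos, Finset.card_univ]; exact hℓ1.trans hℓn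
  have h0 : (0 : ℝ) ∈ N := by
    simp only [hN, Set.mem_setOf_eq, ncard_eq]
    calc ℓ ≤ Fintype.card ι := hℓn
    _ = (univ.filter (fun i => (0:ℝ) ≤ v i)).card := by
        rw [Finset.filter_true_of_mem (fun i _ => hv i)]; simp
  have hbdd : BddAbove N := by
    refine ⟨univ.sup' hιne v, fun t ht => ?_⟩
    simp only [hN, Set.mem_setOf_eq, ncard_eq] at ht
    have hne : (univ.filter (fun i => t ≤ v i)).Nonempty := by
      rw [← Finset.card_pos]; omega
    obtain ⟨i, hi⟩ := hne
    simp only [Finset.mem_filter] at hi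
    exact hi.2.trans (Finset.le_sup' v (Finset.mem_univ i))
  have ht0 : 0 ≤ nthLargest ℓ v := le_csSup hbdd h0
  set t := nthLargest ℓ v with htdef
  -- claim 1: ℓ ≤ card of {i | t ≤ v i}
  have claim1 : ℓ ≤ (univ.filter (fun i => t ≤ v i)).card := by
    by_contra hlt
    push_neg at hlt
    have hGne : (univ \ univ.filter (fun i => t ≤ v i)).Nonempty := by
      rw [← Finset.card_pos, Finset.card_sdiff_of_subset (Finset.filter_subset _ _)]
      have := Finset.card_filter_le (univ : Finset ι) (fun i => t ≤ v i)
      have hcu : (univ : Finset ι).card = Fintype.card ι := Finset.card_univ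
      omega
    set s := (univ \ univ.filter (fun i => t ≤ v i)).sup' hGne v with hs
    have hst : s < t := by
      rw [hs, Finset.sup'_lt_iff]
      intro i hi
      simp only [Finset.mem_sdiff, Finset.mem_filter, Finset.mem_univ, true_and] at hi
      push_neg at hi
      exact hi
    have hub : ∀ u ∈ N, u ≤ s := by
      intro u hu
      simp only [hN, Set.mem_setOf_eq, ncard_eq] at hu
      have : ¬ (univ.filter (fun i => u ≤ v i) ⊆ univ.filter (fun i => t ≤ v i)) := by
        intro hsub
        exact absurd (Finset.card_le_card hsub) (by omega)
      obtain ⟨i, hi1, hi2⟩ := Finset.not_subset.mp this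
      simp only [Finset.mem_filter, Finset.mem_univ, true_and] at hi1
      have : i ∈ univ \ univ.filter (fun i => t ≤ v i) := by
        simp only [Finset.mem_sdiff, Finset.mem_univ, true_and]; exact hi2
      exact hi1.trans (Finset.le_sup' v this)
    have : t ≤ s := csSup_le ⟨0, h0⟩ hub
    linarith
  -- claim 2: card of {i | t < v i} < ℓ
  have claim2 : (univ.filter (fun i => t < v i)).card < ℓ := by
    by_contra hge
    push_neg at hge
    have hAne : (univ.filter (fun i => t < v i)).Nonempty := by
      rw [← Finset.card_pos]; omega
    set u := (univ.filter (fun i => t < v i)).inf' hAne v with hu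
    have htu : t < u := by
      rw [hu, Finset.lt_inf'_iff]
      intro i hi
      simp only [Finset.mem_filter] at hi
      exact hi.2
    have huN : u ∈ N := by
      simp only [hN, Set.mem_setOf_eq, ncard_eq]
      refine hge.trans (Finset.card_le_card ?_)
      intro i hi
      simp only [Finset.mem_filter, Finset.mem_univ, true_and] at hi ⊢
      exact Finset.inf'_le v (by simp [hi])
    have : u ≤ t := le_csSup hbdd huN
    linarith
  have hsub : univ.filter (fun i => t < v i) ⊆ univ.filter (fun i => t ≤ v i) := by
    intro i hi; simp only [Finset.mem_filter] at hi ⊢; exact ⟨hi.1, hi.2.le⟩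
  obtain ⟨T, hT1, hT2, hT3⟩ := Finset.exists_subsuperset_card_eq hsub claim2.le claim1
  refine ⟨ht0, T, hT3, fun i hi => ?_, fun i hi => ?_⟩
  · have := hT2 hi; simp only [Finset.mem_filter] at this; exact this.2
  · by_contra hlt
    push_neg at hlt
    exact hi (hT1 (by simp [hlt]))

end helpers

theorem stmt10 {C : Type*} [Fintype C] [MetricSpace C] (k ℓ : ℕ)
    (hℓ1 : 1 ≤ ℓ) (hℓn : ℓ ≤ Fintype.card C)
    (Sstar : Finset C) (hSstar : Sstar.Nonempty)
    (S : Finset C) (hS : S.Nonempty)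
    -- the clusters C*_1, ..., C*_k partition C, with centers c*_q ∈ S*
    (cl : Fin k → Finset C) (c : Fin k → C)
    (hpart : ∀ j : C, ∃ q, j ∈ cl q)
    (hdisj : ∀ q q', q ≠ q' → Disjoint (cl q) (cl q'))
    (hcmem : ∀ q, c q ∈ Sstar)
    (hcnear : ∀ q, ∀ j ∈ cl q,
      Sstar.inf' hSstar (fun a => dist j a) = dist j (c q))
    (ε γ : ℝ) (hε : 0 ≤ ε) (hγ : 2 ≤ γ)
    -- t*_ℓ is the ℓ-th largest value of d(j, S*), OPT = Top_ℓ(d(C, S*))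
    (tstar OPT : ℝ)
    (htstar : tstar = nthLargest ℓ (fun j => Sstar.inf' hSstar (fun a => dist j a)))
    (hOPT : OPT = Topl ℓ (fun j => Sstar.inf' hSstar (fun a => dist j a)))
    (tℓ : ℝ) (htℓ1 : tstar ≤ tℓ)
    (htℓ2 : tℓ ≤ max ((1 + ε) * tstar) (ε * OPT / (ℓ : ℝ)))
    -- every cluster is ℓ-good
    (hgood : ∀ q, ∑ j ∈ cl q, max (S.inf' hS (fun a => dist j a) - 2 * tℓ) 0 ≤
      γ * ∑ j ∈ cl q, max (dist j (c q) - tℓ) 0) :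
    Topl ℓ (fun j => S.inf' hS (fun a => dist j a)) ≤
      (1 + ε) * γ * Topl ℓ (fun j => Sstar.inf' hSstar (fun a => dist j a)) := by
  classical
  set v : C → ℝ := fun j => Sstar.inf' hSstar (fun a => dist j a) with hvdef
  set w : C → ℝ := fun j => S.inf' hS (fun a => dist j a) with hwdef
  have hv0 : ∀ j, 0 ≤ v j := fun j => Finset.le_inf' hSstar _ (fun a _ => dist_nonneg)
  obtain ⟨ht0', T, hTcard, hTin, hTout⟩ := nthLargest_spec ℓ v hℓ1 hℓn hv0
  rw [← htstar] at ht0' hTin hTout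
  have hℓR : (1:ℝ) ≤ (ℓ : ℝ) := by exact_mod_cast hℓ1
  have hℓpos : (0:ℝ) < (ℓ : ℝ) := by linarith
  -- key2 : ℓ t* + ∑ (v - t*)^+ ≤ OPT
  have hsum_eq : ∑ j ∈ univ, max (v j - tstar) 0 = ∑ j ∈ T, v j - (ℓ : ℝ) * tstar := by
    rw [← Finset.sum_subset (Finset.subset_univ T)
      (fun j _ hj => max_eq_right (by linarith [hTout j hj]))]
    rw [Finset.sum_congr rfl (fun j hj => max_eq_left (by linarith [hTin j hj]))]
    rw [Finset.sum_sub_distrib, Finset.sum_const, hTcard, nsmul_eq_mul]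
  have hTle : ∑ j ∈ T, v j ≤ OPT := by rw [hOPT]; exact le_topl ℓ v hTcard
  have key2 : (ℓ : ℝ) * tstar + ∑ j ∈ univ, max (v j - tstar) 0 ≤ OPT := by
    rw [hsum_eq]; linarith
  have hmaxnn : (0:ℝ) ≤ ∑ j ∈ univ, max (v j - tstar) 0 :=
    Finset.sum_nonneg (fun j _ => le_max_right _ _)
  have key2' : (ℓ : ℝ) * tstar ≤ OPT := by linarith
  have hOPT0 : 0 ≤ OPT := by
    have : (0:ℝ) ≤ (ℓ : ℝ) * tstar := mul_nonneg hℓpos.le ht0'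
    linarith
  -- key1 : Topl w ≤ 2 ℓ tℓ + ∑ (w - 2tℓ)^+
  have key1 : Topl ℓ w ≤ 2 * (ℓ : ℝ) * tℓ + ∑ j ∈ univ, max (w j - 2 * tℓ) 0 := by
    apply topl_le ℓ w hℓn
    intro T' hT'
    calc ∑ j ∈ T', w j ≤ ∑ j ∈ T', (2 * tℓ + max (w j - 2 * tℓ) 0) :=
          Finset.sum_le_sum (fun j _ => by
            have := le_max_left (w j - 2 * tℓ) 0; linarith)
      _ = 2 * (ℓ : ℝ) * tℓ + ∑ j ∈ T', max (w j - 2 * tℓ) 0 := by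
          rw [Finset.sum_add_distrib, Finset.sum_const, hT', nsmul_eq_mul]; ring
      _ ≤ 2 * (ℓ : ℝ) * tℓ + ∑ j ∈ univ, max (w j - 2 * tℓ) 0 := by
          have := Finset.sum_le_sum_of_subset_of_nonneg (Finset.subset_univ T')
            (fun j _ _ => le_max_right (w j - 2 * tℓ) 0)
          linarith
  -- partition
  have huniv : (univ : Finset C) = (univ : Finset (Fin k)).biUnion cl := by
    ext j; simpa using hpart j
  have hPD : (↑(univ : Finset (Fin k)) : Set (Fin k)).PairwiseDisjoint cl :=
    fun q _ q' _ h => hdisj q q' h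
  have key_good : ∑ j ∈ univ, max (w j - 2 * tℓ) 0 ≤ γ * ∑ j ∈ univ, max (v j - tℓ) 0 := by
    calc ∑ j ∈ univ, max (w j - 2 * tℓ) 0
        = ∑ q, ∑ j ∈ cl q, max (w j - 2 * tℓ) 0 := by rw [huniv, Finset.sum_biUnion hPD]
      _ ≤ ∑ q, γ * ∑ j ∈ cl q, max (dist j (c q) - tℓ) 0 :=
          Finset.sum_le_sum (fun q _ => hgood q)
      _ = γ * ∑ q, ∑ j ∈ cl q, max (v j - tℓ) 0 := by
          rw [Finset.mul_sum]
          refine Finset.sum_congr rfl (fun q _ => ?_)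
          congr 1
          refine Finset.sum_congr rfl (fun j hj => ?_)
          rw [show v j = dist j (c q) from hcnear q j hj]
      _ = γ * ∑ j ∈ univ, max (v j - tℓ) 0 := by rw [huniv, Finset.sum_biUnion hPD]
  have key_mono : ∑ j ∈ univ, max (v j - tℓ) 0 ≤ ∑ j ∈ univ, max (v j - tstar) 0 :=
    Finset.sum_le_sum (fun j _ => max_le_max (by linarith) le_rfl)
  have hγ0 : (0:ℝ) ≤ γ := by linarith
  have key3 : Topl ℓ w ≤ 2 * (ℓ : ℝ) * tℓ + γ * (OPT - (ℓ : ℝ) * tstar) := by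
    have h1 : γ * ∑ j ∈ univ, max (v j - tℓ) 0 ≤ γ * ∑ j ∈ univ, max (v j - tstar) 0 :=
      mul_le_mul_of_nonneg_left key_mono hγ0
    have h2 : γ * ∑ j ∈ univ, max (v j - tstar) 0 ≤ γ * (OPT - (ℓ : ℝ) * tstar) :=
      mul_le_mul_of_nonneg_left (by linarith) hγ0
    linarith
  rw [← hOPT]
  rcases le_max_iff.mp htℓ2 with h | h
  · have hA : (ℓ : ℝ) * tℓ ≤ (ℓ : ℝ) * ((1 + ε) * tstar) :=
      mul_le_mul_of_nonneg_left h hℓpos.le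
    nlinarith [mul_nonneg (mul_nonneg (by linarith : (0:ℝ) ≤ γ - 2) hε) hOPT0,
      mul_le_mul_of_nonneg_left key2' hε,
      mul_nonneg (mul_nonneg (by linarith : (0:ℝ) ≤ γ - 2) hℓpos.le) ht0']
  · have hB : (ℓ : ℝ) * tℓ ≤ ε * OPT := by
      rw [le_div_iff₀ hℓpos] at h; linarith
    nlinarith [mul_nonneg (mul_nonneg (by linarith : (0:ℝ) ≤ γ - 2) hε) hOPT0,
      mul_nonneg hγ0 (mul_nonneg hℓpos.le ht0')]
end

section
/- Let (C, d) be a finite metric space where agents are a subset of points and candidates A a (possibly different) finite subset; for each j ∈ C let top(j) ∈ A be a nearest candidate to j. Let S* ⊆ A be an optimal k-median solution with cost OPT = ∑_{j∈C} d(j, S*) and additionally assume ∑_{j∈C} d(j, top(j)) ≤ OPT. Then there exists S̃ ⊆ {top(j) : j ∈ C} with |S̃| ≤ k and ∑_{j∈C} min_{i∈S̃} d(i,j) ≤ 3·OPT. -/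
open Finset

theorem stmt14 {M : Type*} [MetricSpace M] [DecidableEq M] (C A : Finset M) (hC : C.Nonempty)
    (k : ℕ) (hk : 1 ≤ k)
    -- top j : a nearest candidate to agent j
    (top : M → M) (htopmem : ∀ j ∈ C, top j ∈ A)
    (htopnear : ∀ j ∈ C, ∀ a ∈ A, dist j (top j) ≤ dist j a)
    -- S* : an optimal k-median solution, of cost OPT
    (Sstar : Finset M) (hSsub : Sstar ⊆ A) (hSne : Sstar.Nonempty)
    (hScard : Sstar.card ≤ k)
    (OPT : ℝ) (hOPT : OPT = ∑ j ∈ C, Sstar.inf' hSne (fun a => dist j a))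
    (hopt : ∀ (T : Finset M) (hT : T.Nonempty), T ⊆ A → T.card ≤ k →
      OPT ≤ ∑ j ∈ C, T.inf' hT (fun a => dist j a))
    -- additional assumption: total distance to the nearest candidates is ≤ OPT
    (htopsum : ∑ j ∈ C, dist j (top j) ≤ OPT) :
    ∃ (St : Finset M) (hSt : St.Nonempty), St ⊆ C.image top ∧ St.card ≤ k ∧
      ∑ j ∈ C, St.inf' hSt (fun a => dist j a) ≤ 3 * OPT := by
  have h : ∀ i : M, ∃ j ∈ C, ∀ j' ∈ C,
      dist i j + dist j (top j) ≤ dist i j' + dist j' (top j') := fun i =>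
    C.exists_min_image (fun j => dist i j + dist j (top j)) hC
  choose φ hφC hφmin using h
  refine ⟨Sstar.image (fun i => top (φ i)), hSne.image _, ?_, ?_, ?_⟩
  · intro x hx
    simp only [mem_image] at hx ⊢
    obtain ⟨i, hi, rfl⟩ := hx
    exact ⟨φ i, hφC i, rfl⟩
  · exact (card_image_le).trans hScard
  · have key : ∀ j ∈ C,
        (Sstar.image (fun i => top (φ i))).inf' (hSne.image _) (fun a => dist j a)
          ≤ 2 * Sstar.inf' hSne (fun a => dist j a) + dist j (top j) := by
      intro j hj
      obtain ⟨i, hi, hieq⟩ := Sstar.exists_mem_eq_inf' hSne (fun a => dist j a)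
      have h1 : (Sstar.image (fun i => top (φ i))).inf' (hSne.image _) (fun a => dist j a)
          ≤ dist j (top (φ i)) := inf'_le _ (mem_image_of_mem _ hi)
      have h2 : dist j (top (φ i)) ≤ dist j i + (dist i (φ i) + dist (φ i) (top (φ i))) := by
        calc dist j (top (φ i)) ≤ dist j (φ i) + dist (φ i) (top (φ i)) := dist_triangle _ _ _
          _ ≤ dist j i + dist i (φ i) + dist (φ i) (top (φ i)) := by
              have := dist_triangle j i (φ i); linarith
          _ = _ := by ring
      have h3 : dist i (φ i) + dist (φ i) (top (φ i)) ≤ dist i j + dist j (top j) :=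
        hφmin i j hj
      have h4 : dist i j = dist j i := dist_comm _ _
      rw [hieq]
      linarith
    calc ∑ j ∈ C, (Sstar.image (fun i => top (φ i))).inf' (hSne.image _) (fun a => dist j a)
        ≤ ∑ j ∈ C, (2 * Sstar.inf' hSne (fun a => dist j a) + dist j (top j)) :=
          Finset.sum_le_sum key
      _ = 2 * (∑ j ∈ C, Sstar.inf' hSne (fun a => dist j a)) + ∑ j ∈ C, dist j (top j) := by
          rw [Finset.sum_add_distrib, Finset.mul_sum]
      _ ≤ 2 * OPT + OPT := by rw [← hOPT]; linarith
      _ = 3 * OPT := by ring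
end

section
/- Let (C∪A, d) be a finite metric space with agents C and candidates A; for j ∈ C let top(j) ∈ A be a nearest candidate. Let S* ⊆ A be an optimal 1-center-objective (k-center) solution of radius OPT₁ = max_{j∈C} d(j,S*) with induced clusters C*_1,…,C*_k. If a greedy procedure opens centers top(s_t) where s_t is an agent farthest from the currently open set, and at some step the selected agent s_t satisfies top(s_t) = a₂ where some a₁ with both a₁, a₂ belonging to the same optimal cluster C*_i was already opened, then every agent j ∈ C satisfies d(j, S_{t−1}) ≤ 3·OPT₁, where S_{t−1} is the set of centers open before step t. -/
open Finset

theorem stmt15 {M : Type*} [MetricSpace M] (C A : Finset M) (hC : C.Nonempty)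
    -- top j : a nearest candidate to agent j
    (top : M → M) (htopmem : ∀ j ∈ C, top j ∈ A)
    (htopnear : ∀ j ∈ C, ∀ a ∈ A, dist j (top j) ≤ dist j a)
    -- S* : an optimal k-center solution (a subset of candidates) of radius OPT₁
    (Sstar : Finset M) (hSsub : Sstar ⊆ A) (hSne : Sstar.Nonempty)
    (OPT1 : ℝ) (hOPT1 : OPT1 = C.sup' hC (fun j => Sstar.inf' hSne (fun a => dist j a)))
    -- s_t ∈ C is the selected agent, with a₂ = top(s_t)
    (st : M) (hst : st ∈ C) (a₁ a₂ : M) (ha₁A : a₁ ∈ A) (ha₂ : a₂ = top st)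
    -- a₁ and a₂ belong to the same optimal cluster, with center c ∈ S*
    (c : M) (hc : c ∈ Sstar) (ha₁c : dist a₁ c ≤ OPT1) (ha₂c : dist a₂ c ≤ OPT1)
    -- a₁ was already opened: a₁ ∈ S_{t-1}
    (St1 : Finset M) (hSt1 : St1.Nonempty) (ha₁mem : a₁ ∈ St1)
    -- farthest-point rule: s_t is an agent farthest from the open centers
    (hfar : ∀ j ∈ C, St1.inf' hSt1 (fun a => dist j a) ≤
      St1.inf' hSt1 (fun a => dist st a)) :
    ∀ j ∈ C, St1.inf' hSt1 (fun a => dist j a) ≤ 3 * OPT1 := by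
  intro j hj
  have hsta₂ : dist st a₂ ≤ OPT1 := by
    have h1 : dist st a₂ ≤ Sstar.inf' hSne (fun a => dist st a) := by
      apply Finset.le_inf'
      intro b hb
      rw [ha₂]
      exact htopnear st hst b (hSsub hb)
    have h2 : Sstar.inf' hSne (fun a => dist st a) ≤ OPT1 := by
      rw [hOPT1]
      exact Finset.le_sup' (fun j => Sstar.inf' hSne (fun a => dist j a)) hst
    linarith
  have h3 : St1.inf' hSt1 (fun a => dist st a) ≤ dist st a₁ :=
    Finset.inf'_le _ ha₁mem
  have h4 : dist st a₁ ≤ dist st a₂ + dist a₂ c + dist c a₁ :=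
    dist_triangle4 st a₂ c a₁
  have := hfar j hj
  rw [dist_comm c a₁] at h4
  linarith
end
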